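/- For all integers n ≥ 4 and 2 ≤ k ≤ n−2, Σ_{m=k+1}^{n−1} p_M(n,m)·p_L(m,k) = ((n+1)(n+2)/((n−1)(n−2)(n−3)))·(72(k−1)/((k+1)(k+2)(k+3)))·((n+3)/(k+4) − 1). (This is the distribution of the splitting index of the second coalescence among four randomly chosen tips of a standard Yule n-tree.) -/

import Mathlib

open Finset

/-- `n`-th harmonic number. -/
noncomputable def H (n : ℕ) : ℝ := ∑ k ∈ Finset.Icc 1 n, (1 : ℝ) / k

/-- Second-order harmonic number. -/
noncomputable def Hbar (n : ℕ) : ℝ := ∑ k ∈ Finset.Icc 1 n, (1 : ℝ) / (k : ℝ) ^ 2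

noncomputable def pK (n k : ℕ) : ℝ :=
  ((n : ℝ) + 1) / ((n : ℝ) - 1) * (2 / (((k : ℝ) + 1) * ((k : ℝ) + 2)))

noncomputable def pL (n k : ℕ) : ℝ :=
  ((n : ℝ) + 1) * ((n : ℝ) + 2) / (((n : ℝ) - 1) * ((n : ℝ) - 2)) *
    (6 * ((k : ℝ) - 1) / (((k : ℝ) + 1) * ((k : ℝ) + 2) * ((k : ℝ) + 3)))

noncomputable def pM (n k : ℕ) : ℝ :=
  ((n : ℝ) + 1) * ((n : ℝ) + 2) * ((n : ℝ) + 3) /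
      (((n : ℝ) - 1) * ((n : ℝ) - 2) * ((n : ℝ) - 3)) *
    (12 * ((k : ℝ) - 1) * ((k : ℝ) - 2) /
      (((k : ℝ) + 1) * ((k : ℝ) + 2) * ((k : ℝ) + 3) * ((k : ℝ) + 4)))

noncomputable def pKL (n k : ℕ) : ℝ :=
  ((n : ℝ) + 1) / (((n : ℝ) - 1) * ((n : ℝ) - 2)) *
    (12 / (((k : ℝ) + 1) * ((k : ℝ) + 2))) * (((n : ℝ) + 2) / ((k : ℝ) + 3) - 1)

noncomputable def pLM (n k : ℕ) : ℝ :=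
  ((n : ℝ) + 1) * ((n : ℝ) + 2) / (((n : ℝ) - 1) * ((n : ℝ) - 2) * ((n : ℝ) - 3)) *
    (72 * ((k : ℝ) - 1) / (((k : ℝ) + 1) * ((k : ℝ) + 2) * ((k : ℝ) + 3))) *
      (((n : ℝ) + 3) / ((k : ℝ) + 4) - 1)

noncomputable def pKLM (n k : ℕ) : ℝ :=
  ((n : ℝ) + 3) / (((n : ℝ) - 1) * ((n : ℝ) - 2) * ((n : ℝ) - 3)) *
      (72 / (((k : ℝ) + 1) * ((k : ℝ) + 2))) *
      (((n : ℝ) + 1) * ((n : ℝ) + 2) / (((k : ℝ) + 3) * ((k : ℝ) + 4)) - 1) -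
    ((n : ℝ) + 2) / (((n : ℝ) - 1) * ((n : ℝ) - 2) * ((n : ℝ) - 3)) *
      (144 / (((k : ℝ) + 1) * ((k : ℝ) + 2))) * (((n : ℝ) + 1) / ((k : ℝ) + 3) - 1)


lemma tel (a : ℕ) : ∀ b : ℕ, a ≤ b + 1 →
    ∑ m ∈ Finset.Icc a b, ((1:ℝ)/((m:ℝ)+3) - 1/((m:ℝ)+4)) = 1/((a:ℝ)+3) - 1/((b:ℝ)+4) := by
  intro b
  induction b with
  | zero =>
    intro ha
    interval_cases a
    · simp
    · simp [Finset.Icc_eq_empty_of_lt]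
      norm_num
  | succ b ih =>
    intro ha
    rcases Nat.lt_or_ge a (b + 2) with h | h
    · have ha' : a ≤ b + 1 := Nat.lt_succ_iff.mp h
      rw [Finset.sum_Icc_succ_top ha', ih ha']
      push_cast
      ring
    · have : a = b + 2 := le_antisymm ha h
      subst this
      rw [Finset.Icc_eq_empty_of_lt (by omega)]
      push_cast
      simp
      ring

theorem yule_second_coalescence_of_four (n k : ℕ) (hn : 4 ≤ n) (hk1 : 2 ≤ k)
    (hk2 : k ≤ n - 2) :
    ∑ m ∈ Finset.Icc (k + 1) (n - 1), pM n m * pL m k = pLM n k := by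
  have hk1n : k + 1 ≤ (n - 1) + 1 := by omega
  set c : ℝ := ((n : ℝ) + 1) * ((n : ℝ) + 2) * ((n : ℝ) + 3) /
      (((n : ℝ) - 1) * ((n : ℝ) - 2) * ((n : ℝ) - 3)) *
      (12 * (6 * ((k : ℝ) - 1) / (((k : ℝ) + 1) * ((k : ℝ) + 2) * ((k : ℝ) + 3)))) with hc
  have hn1 : ((n : ℝ) - 1) ≠ 0 := by
    have : (4:ℝ) ≤ (n:ℝ) := by exact_mod_cast hn
    nlinarith
  have hn2 : ((n : ℝ) - 2) ≠ 0 := by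
    have : (4:ℝ) ≤ (n:ℝ) := by exact_mod_cast hn
    nlinarith
  have hn3 : ((n : ℝ) - 3) ≠ 0 := by
    have : (4:ℝ) ≤ (n:ℝ) := by exact_mod_cast hn
    nlinarith
  have step : ∀ m ∈ Finset.Icc (k + 1) (n - 1),
      pM n m * pL m k = c * ((1:ℝ)/((m:ℝ)+3) - 1/((m:ℝ)+4)) := by
    intro m hm
    simp only [Finset.mem_Icc] at hm
    have hm3 : 3 ≤ m := by omega
    have hm3' : (3:ℝ) ≤ (m:ℝ) := by exact_mod_cast hm3
    have h1 : ((m : ℝ) - 1) ≠ 0 := by nlinarith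
    have h2 : ((m : ℝ) - 2) ≠ 0 := by nlinarith
    have hmpos : (0:ℝ) < (m:ℝ) := by nlinarith
    rw [pM, pL, hc]
    field_simp
    ring
  rw [Finset.sum_congr rfl step, ← Finset.mul_sum, tel _ _ hk1n]
  have hcast : ((n - 1 : ℕ) : ℝ) = (n : ℝ) - 1 := by
    have : 1 ≤ n := by omega
    push_cast [this]
    ring
  rw [hcast, pLM, hc]
  have hk4 : ((k:ℝ) + 4) ≠ 0 := by positivity
  have hk3 : ((k:ℝ) + 3) ≠ 0 := by positivity
  have hk2' : ((k:ℝ) + 2) ≠ 0 := by positivity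
  have hk1' : ((k:ℝ) + 1) ≠ 0 := by positivity
  have : ((n:ℝ) - 1) + 4 = (n:ℝ) + 3 := by ring
  rw [this]
  have hn3' : ((n:ℝ) + 3) ≠ 0 := by positivity
  push_cast
  field_simp
  ring
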